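/- Let n ≥ 1 and let k be a commutative ring. For index pairs with 1 ≤ u < v ≤ n+1, 1 ≤ i < j ≤ n+1, 1 ≤ a < b ≤ n+1, if e_{ab} > e_{ij} > e_{uv} in the given total order, then the iterated matrix commutator [[e_{uv}, e_{ab}], e_{ij}] equals 0 in the (n+1)×(n+1) matrices over k. -/

import Mathlib

/-- The matrix unit `e_{ij}` in the `(n+1)×(n+1)` matrices over `k`
(indices are modeled 0-based, so `i : Fin (n+1)` corresponds to `1 ≤ i+1 ≤ n+1`). -/
def E {n : ℕ} (k : Type*) [CommRing k] (i j : Fin (n + 1)) :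
    Matrix (Fin (n + 1)) (Fin (n + 1)) k :=
  Matrix.single i j 1

/-- The total order on index pairs: `e_{ab} < e_{ij}` iff `a+b < i+j`, or
(`a+b = i+j` and `b < j`). -/
def pairLt {n : ℕ} (a b i j : Fin (n + 1)) : Prop :=
  a.val + b.val < i.val + j.val ∨ (a.val + b.val = i.val + j.val ∧ b.val < j.val)

/-- A triple product of matrix units vanishes if indices fail to chain. -/
lemma E_triple_zero {n : ℕ} (k : Type*) [CommRing k] (p q r s t w : Fin (n + 1))
    (h : q ≠ r ∨ s ≠ t) : E k p q * E k r s * E k t w = 0 := by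
  rcases h with h | h
  · rw [E, E, E, Matrix.single_mul_single_of_ne (h := h), Matrix.zero_mul]
  · by_cases hqr : q = r
    · subst hqr
      rw [E, E, E, Matrix.single_mul_single_same, Matrix.single_mul_single_of_ne (h := h)]
    · rw [E, E, E, Matrix.single_mul_single_of_ne (h := hqr), Matrix.zero_mul]

/-- If `e_{ab} > e_{ij} > e_{uv}` then the iterated matrix commutator
`[[e_{uv}, e_{ab}], e_{ij}]` vanishes. -/
theorem stmt0 {n : ℕ} (hn : 1 ≤ n) (k : Type*) [CommRing k]
    (u v i j a b : Fin (n + 1)) (huv : u < v) (hij : i < j) (hab : a < b)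
    (h₁ : pairLt i j a b) (h₂ : pairLt u v i j) :
    (E k u v * E k a b - E k a b * E k u v) * E k i j
      - E k i j * (E k u v * E k a b - E k a b * E k u v) = 0 := by
  rw [Fin.lt_iff_val_lt_val] at huv hij hab
  simp only [pairLt] at h₁ h₂
  have hA : v ≠ a ∨ b ≠ i := by
    rw [← not_and_or]; rintro ⟨rfl, rfl⟩
    simp only [Fin.val_fin_lt] at *; omega
  have hB : b ≠ u ∨ v ≠ i := by
    rw [← not_and_or]; rintro ⟨rfl, rfl⟩
    omega
  have hC : j ≠ u ∨ v ≠ a := by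
    rw [← not_and_or]; rintro ⟨rfl, rfl⟩
    omega
  have hD : j ≠ a ∨ b ≠ u := by
    rw [← not_and_or]; rintro ⟨rfl, rfl⟩
    omega
  have A : E k u v * E k a b * E k i j = 0 := E_triple_zero k _ _ _ _ _ _ hA
  have B : E k a b * E k u v * E k i j = 0 := E_triple_zero k _ _ _ _ _ _ hB
  have C : E k i j * E k u v * E k a b = 0 := E_triple_zero k _ _ _ _ _ _ hC
  have D : E k i j * E k a b * E k u v = 0 := E_triple_zero k _ _ _ _ _ _ hD
  rw [sub_mul, mul_sub, ← mul_assoc, ← mul_assoc, A, B, C, D, sub_zero, sub_zero]
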